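/- Let τ be a stopping time taking values in {1,…,N}, and for each T let F_T be the revealed-information σ-algebra with {τ = T} ∈ F_T. Let E_{1,T}, …, E_{m,T} be events that are conditionally independent given F_T, each with the same conditional probability P[E_{1,T} | F_T]. Then P[∪_T ({τ=T} ∩ E_{1,T} ∩ ⋯ ∩ E_{m,T})] ≥ (Σ_T P[{τ=T} ∩ E_{1,T}])^m. -/

import Mathlib

open MeasureTheory

/-- Jensen lower bound for correlated instances: if `τ ∈ {1,…,N}` is a stopping time and, on
`{τ = T}`, the events `E_{0,T},…,E_{m−1,T}` are conditionally independent given the revealed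
information with common conditional probability `g_T ∈ [0,1]` (expressed through the two
integral identities below), then
`P[⋃_T ({τ=T} ∩ E_{0,T} ∩ ⋯ ∩ E_{m−1,T})] ≥ (Σ_T P[{τ=T} ∩ E_{0,T}])^m`. -/
theorem stmt_13 {Ω : Type*} [MeasurableSpace Ω] (μ : Measure Ω) [IsProbabilityMeasure μ]
    (N m : ℕ) (hm : 1 ≤ m) (τ : Ω → ℕ) (hτmeas : Measurable τ)
    (hτ : ∀ ω, τ ω ∈ Finset.Icc 1 N)
    (E : ℕ → ℕ → Set Ω) (hE : ∀ i T, MeasurableSet (E i T))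
    (g : ℕ → Ω → ℝ) (hgmeas : ∀ T, Measurable (g T))
    (hg0 : ∀ T ω, 0 ≤ g T ω) (hg1 : ∀ T ω, g T ω ≤ 1)
    (hprod : ∀ T ∈ Finset.Icc 1 N,
      (μ ({ω | τ ω = T} ∩ ⋂ i ∈ Finset.range m, E i T)).toReal =
        ∫ ω in {ω | τ ω = T}, (g T ω) ^ m ∂μ)
    (hone : ∀ T ∈ Finset.Icc 1 N,
      (μ ({ω | τ ω = T} ∩ E 0 T)).toReal = ∫ ω in {ω | τ ω = T}, g T ω ∂μ) :
    (μ (⋃ T ∈ Finset.Icc 1 N, ({ω | τ ω = T} ∩ ⋂ i ∈ Finset.range m, E i T))).toReal ≥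
      (∑ T ∈ Finset.Icc 1 N, (μ ({ω | τ ω = T} ∩ E 0 T)).toReal) ^ m := by
  classical
  set A : ℕ → Set Ω := fun T => {ω | τ ω = T} with hA
  have hAmeas : ∀ T, MeasurableSet (A T) := fun T => hτmeas (measurableSet_singleton T)
  have hUniv : ⋃ T ∈ Finset.Icc 1 N, A T = Set.univ :=
    Set.eq_univ_of_forall fun ω => Set.mem_biUnion (hτ ω) rfl
  have hAdisj : (↑(Finset.Icc 1 N) : Set ℕ).Pairwise (Function.onFun Disjoint A) := by
    intro T1 _ T2 _ hne
    exact Set.disjoint_left.2 fun ω h1 h2 => hne ((h1 : τ ω = T1).symm.trans h2)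
  set h : Ω → ℝ := fun ω => g (τ ω) ω with hhdef
  have hheq : ∀ T, ∀ ω ∈ A T, h ω = g T ω := by
    intro T ω hω
    simp only [hhdef]
    rw [(hω : τ ω = T)]
  have hhmeas : Measurable h := by
    have : h = fun ω => ∑ T ∈ Finset.Icc 1 N, Set.indicator (A T) (g T) ω := by
      funext ω
      rw [Finset.sum_eq_single (τ ω)]
      · exact (Set.indicator_of_mem (show ω ∈ A (τ ω) from rfl) (g (τ ω))).symm
      · intro T _ hne
        have hnm : ω ∉ A T := fun hmem => hne (Eq.symm hmem)
        exact Set.indicator_of_notMem hnm (g T)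
      · intro habs; exact absurd (hτ ω) habs
    rw [this]
    exact Finset.measurable_sum _ fun T _ => (hgmeas T).indicator (hAmeas T)
  have hh0 : ∀ ω, 0 ≤ h ω := fun ω => hg0 _ ω
  have hh1 : ∀ ω, h ω ≤ 1 := fun ω => hg1 _ ω
  have hint : Integrable h μ := by
    refine (integrable_const (1 : ℝ)).mono' hhmeas.aestronglyMeasurable ?_
    exact ae_of_all _ fun ω => by
      rw [Real.norm_eq_abs, abs_of_nonneg (hh0 ω)]; exact hh1 ω
  have hintm : Integrable (fun ω => h ω ^ m) μ := by
    refine (integrable_const (1 : ℝ)).mono' (hhmeas.pow_const m).aestronglyMeasurable ?_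
    exact ae_of_all _ fun ω => by
      rw [Real.norm_eq_abs, abs_of_nonneg (pow_nonneg (hh0 ω) m)]
      exact pow_le_one₀ (hh0 ω) (hh1 ω)
  -- rewrite LHS
  have hLHS : (μ (⋃ T ∈ Finset.Icc 1 N, (A T ∩ ⋂ i ∈ Finset.range m, E i T))).toReal =
      ∫ ω, h ω ^ m ∂μ := by
    have hdisj : (↑(Finset.Icc 1 N) : Set ℕ).Pairwise
        (Function.onFun Disjoint fun T => A T ∩ ⋂ i ∈ Finset.range m, E i T) := by
      intro T1 h1 T2 h2 hne
      exact (hAdisj h1 h2 hne).mono Set.inter_subset_left Set.inter_subset_left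
    have hmeasInt : ∀ T ∈ Finset.Icc 1 N,
        MeasurableSet (A T ∩ ⋂ i ∈ Finset.range m, E i T) := fun T _ =>
      (hAmeas T).inter (MeasurableSet.biInter (Finset.range m).countable_toSet
        fun i _ => hE i T)
    rw [measure_biUnion_finset hdisj hmeasInt, ENNReal.toReal_sum
      (fun T _ => measure_ne_top μ _)]
    have step : ∀ T ∈ Finset.Icc 1 N,
        (μ (A T ∩ ⋂ i ∈ Finset.range m, E i T)).toReal = ∫ ω in A T, h ω ^ m ∂μ := by
      intro T hT
      rw [hprod T hT]
      exact (setIntegral_congr_fun (hAmeas T)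
        (fun ω hω => by rw [hheq T ω hω])).symm
    rw [Finset.sum_congr rfl step]
    rw [← MeasureTheory.integral_biUnion_finset (Finset.Icc 1 N)
      (fun T _ => hAmeas T) hAdisj (fun T _ => hintm.integrableOn)]
    rw [hUniv, setIntegral_univ]
  have hRHS : (∑ T ∈ Finset.Icc 1 N, (μ (A T ∩ E 0 T)).toReal) = ∫ ω, h ω ∂μ := by
    have step : ∀ T ∈ Finset.Icc 1 N,
        (μ (A T ∩ E 0 T)).toReal = ∫ ω in A T, h ω ∂μ := by
      intro T hT
      rw [hone T hT]
      exact (setIntegral_congr_fun (hAmeas T) (fun ω hω => hheq T ω hω)).symm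
    rw [Finset.sum_congr rfl step]
    rw [← MeasureTheory.integral_biUnion_finset (Finset.Icc 1 N)
      (fun T _ => hAmeas T) hAdisj (fun T _ => hint.integrableOn)]
    rw [hUniv, setIntegral_univ]
  rw [hLHS, hRHS]
  -- Jensen
  have hconv : ConvexOn ℝ (Set.Icc (0:ℝ) 1) (fun x : ℝ => x ^ m) :=
    (convexOn_pow m).subset (Set.Icc_subset_Ici_self) (convex_Icc 0 1)
  have := hconv.map_average_le ((continuous_pow m).continuousOn) isClosed_Icc
    (ae_of_all _ fun ω => Set.mem_Icc.2 ⟨hh0 ω, hh1 ω⟩) hint hintm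
  rwa [average_eq_integral, average_eq_integral] at this
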